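/- arXiv:2101.08743 — 2 statements merged into one kernel-verified Lean document; each statement's English description precedes it below -/
import Mathlib

section
/- Let σ > 0 and μ, c ∈ ℝ. If X is distributed according to the Gaussian measure on ℝ with mean μ and variance σ², then the expected improvement over the threshold c satisfies E[max(0, c − X)] = (c − μ)·Φ((c − μ)/σ) + σ·φ((c − μ)/σ), where Φ and φ denote the cumulative distribution function and probability density function of the standard normal distribution, respectively. -/
open MeasureTheory ProbabilityTheory Real
open Filter Set Topology

/-- The standard normal cumulative distribution function `Φ`. -/
noncomputable def stdGaussianCDF (x : ℝ) : ℝ := (gaussianReal 0 1 (Set.Iic x)).toReal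

/-- The standard normal probability density function `φ`. -/
noncomputable def stdGaussianPDF (x : ℝ) : ℝ := gaussianPDFReal 0 1 x


lemma pdf01_eq (z : ℝ) :
    gaussianPDFReal 0 1 z = (Real.sqrt (2 * π))⁻¹ * Real.exp (-(z ^ 2) / 2) := by
  simp [gaussianPDFReal]

lemma hasDerivAt_neg_pdf (z : ℝ) :
    HasDerivAt (fun y => -gaussianPDFReal 0 1 y) (z * gaussianPDFReal 0 1 z) z := by
  simp only [pdf01_eq]
  have hd : HasDerivAt (fun y : ℝ => -(y ^ 2) / 2) (-(2 * z ^ (2 - 1)) / 2) z :=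
    ((hasDerivAt_pow 2 z).neg).div_const 2
  have : HasDerivAt (fun y => -((Real.sqrt (2 * π))⁻¹ * Real.exp (-(y ^ 2) / 2))) _ z :=
    (hd.exp.const_mul ((Real.sqrt (2 * π))⁻¹)).neg
  convert this using 1
  simp [pow_one]
  ring

lemma tendsto_neg_pdf_atBot :
    Tendsto (fun y => -gaussianPDFReal 0 1 y) atBot (𝓝 (0 : ℝ)) := by
  simp only [pdf01_eq]
  have h2 : Tendsto (fun y : ℝ => y ^ 2) atBot atTop := by
    have h3 : Tendsto (fun x : ℝ => x ^ 2) atTop atTop :=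
      tendsto_pow_atTop (two_ne_zero)
    have := h3.comp tendsto_neg_atBot_atTop
    simpa [Function.comp_def, neg_sq] using this
  have h1 : Tendsto (fun y : ℝ => -(y ^ 2) / 2) atBot atBot :=
    (tendsto_neg_atTop_atBot.comp h2).atBot_div_const (by norm_num)
  have := ((Real.tendsto_exp_atBot.comp h1).const_mul ((Real.sqrt (2 * π))⁻¹)).neg
  simpa [Function.comp_def] using this

lemma integrable_mul_pdf : Integrable (fun z : ℝ => z * gaussianPDFReal 0 1 z) := by
  have h : Integrable (fun z : ℝ => (Real.sqrt (2 * π))⁻¹ * (z * Real.exp (-(1/2) * z ^ 2))) :=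
    (integrable_mul_exp_neg_mul_sq (by norm_num : (0:ℝ) < 1/2)).const_mul _
  refine h.congr (Filter.Eventually.of_forall fun z => ?_)
  simp only [pdf01_eq]
  ring_nf

lemma cdf_eq (a : ℝ) :
    stdGaussianCDF a = ∫ z in Set.Iic a, gaussianPDFReal 0 1 z := by
  rw [stdGaussianCDF, gaussianReal_apply_eq_integral 0 one_ne_zero (Set.Iic a),
    ENNReal.toReal_ofReal]
  exact integral_nonneg fun z => gaussianPDFReal_nonneg 0 1 z

lemma integral_Iic_mul_pdf (a : ℝ) :
    ∫ z in Set.Iic a, z * gaussianPDFReal 0 1 z = -gaussianPDFReal 0 1 a := by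
  have := integral_Iic_of_hasDerivAt_of_tendsto' (a := a)
    (f := fun y => -gaussianPDFReal 0 1 y) (f' := fun z => z * gaussianPDFReal 0 1 z)
    (fun x _ => hasDerivAt_neg_pdf x) integrable_mul_pdf.integrableOn tendsto_neg_pdf_atBot
  simpa using this

lemma std_integral (a : ℝ) :
    ∫ z, max 0 (a - z) ∂(gaussianReal 0 1) = a * stdGaussianCDF a + stdGaussianPDF a := by
  rw [gaussianReal_of_var_ne_zero 0 one_ne_zero]
  have hpdf : gaussianPDF 0 1 = fun z => ((gaussianPDFReal 0 1 z).toNNReal : ENNReal) := by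
    funext z; rw [gaussianPDF, ENNReal.ofReal]
  rw [hpdf, integral_withDensity_eq_integral_smul
    ((measurable_gaussianPDFReal 0 1).real_toNNReal) _]
  have h1 : (fun z : ℝ => (gaussianPDFReal 0 1 z).toNNReal • max 0 (a - z))
      = fun z => Set.indicator (Set.Iic a) (fun z => a * gaussianPDFReal 0 1 z
          - z * gaussianPDFReal 0 1 z) z := by
    funext z
    rw [NNReal.smul_def, Real.coe_toNNReal _ (gaussianPDFReal_nonneg 0 1 z), smul_eq_mul]
    by_cases hz : z ≤ a
    · rw [Set.indicator_of_mem (Set.mem_Iic.mpr hz), max_eq_right (by linarith)]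
      ring
    · rw [Set.indicator_of_notMem (by simpa using hz), max_eq_left (by linarith), mul_zero]
  rw [h1, integral_indicator measurableSet_Iic, integral_sub
    ((integrable_gaussianPDFReal 0 1).const_mul a).integrableOn
    integrable_mul_pdf.integrableOn,
    integral_const_mul, integral_Iic_mul_pdf, ← cdf_eq]
  simp [stdGaussianPDF]

/-- Closed form of the Expected Improvement: if `X ~ N(μ, σ²)` then
`E[max(0, c − X)] = (c − μ)·Φ((c − μ)/σ) + σ·φ((c − μ)/σ)`. -/
theorem expected_improvement_closed_form (σ μ c : ℝ) (hσ : 0 < σ) :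
    ∫ x, max 0 (c - x) ∂(gaussianReal μ ⟨σ ^ 2, sq_nonneg σ⟩) =
      (c - μ) * stdGaussianCDF ((c - μ) / σ) + σ * stdGaussianPDF ((c - μ) / σ) := by
  set a : ℝ := (c - μ) / σ with ha
  have hσa : σ * a = c - μ := by rw [ha]; field_simp
  have hmap : (gaussianReal 0 1).map (fun z => σ * z + μ)
      = gaussianReal μ ⟨σ ^ 2, sq_nonneg σ⟩ := by
    have h1 : (gaussianReal 0 1).map (fun z => σ * z) = gaussianReal 0 ⟨σ ^ 2, sq_nonneg σ⟩ := by
      have h := gaussianReal_map_const_mul (μ := 0) (v := 1) σ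
      simp at h
      exact h
    have h2 : (gaussianReal 0 ⟨σ ^ 2, sq_nonneg σ⟩).map (fun x => x + μ)
        = gaussianReal μ ⟨σ ^ 2, sq_nonneg σ⟩ := by
      simpa using gaussianReal_map_add_const (μ := 0) (v := ⟨σ ^ 2, sq_nonneg σ⟩) μ
    calc (gaussianReal 0 1).map (fun z => σ * z + μ)
        = ((gaussianReal 0 1).map (fun z => σ * z)).map (fun x => x + μ) := by
          rw [Measure.map_map (by fun_prop) (by fun_prop)]; rfl
      _ = gaussianReal μ ⟨σ ^ 2, sq_nonneg σ⟩ := by rw [h1, h2]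
  rw [← hmap, integral_map (by fun_prop)
    (Continuous.aestronglyMeasurable (f := fun x : ℝ => max 0 (c - x)) (by fun_prop))]
  have h2 : (fun z : ℝ => max 0 (c - (σ * z + μ))) = fun z => σ * max 0 (a - z) := by
    funext z
    rw [mul_max_of_nonneg _ _ hσ.le, mul_zero, mul_sub, hσa]
    ring_nf
  rw [h2, integral_const_mul, std_integral, mul_add, ← mul_assoc, hσa]
end

section
/- Let c, μ_0 ∈ ℝ, σ_0 > 0, and for i = 1, …, m let μ_i ∈ ℝ, σ_i > 0. Let X, G_1, …, G_m be jointly independent real random variables on a probability space, with X Gaussian with mean μ_0 and variance σ_0² and each G_i Gaussian with mean μ_i and variance σ_i². Then the constrained expected improvement factorizes: E[ max(0, c − X) · ∏_{i=1}^m 1{G_i ≤ 0} ] = [ (c − μ_0)Φ((c − μ_0)/σ_0) + σ_0 φ((c − μ_0)/σ_0) ] · ∏_{i=1}^m Φ(−μ_i/σ_i), where Φ and φ are the standard normal cumulative distribution function and density. -/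
open MeasureTheory ProbabilityTheory Real Filter Set

lemma stdGaussianPDF_eq (x : ℝ) : stdGaussianPDF x = (√(2*π))⁻¹ * rexp (-x^2/2) := by
  simp [stdGaussianPDF, gaussianPDFReal]

lemma stdGaussianPDF_nonneg (x : ℝ) : 0 ≤ stdGaussianPDF x := gaussianPDFReal_nonneg 0 1 x

lemma integrable_stdGaussianPDF : Integrable stdGaussianPDF := integrable_gaussianPDFReal 0 1

lemma measurable_stdGaussianPDF : Measurable stdGaussianPDF := measurable_gaussianPDFReal 0 1

lemma integrable_mul_stdGaussianPDF : Integrable (fun x => x * stdGaussianPDF x) := by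
  have h := integrable_rpow_mul_exp_neg_mul_sq (b := (2:ℝ)⁻¹) (by norm_num) (s := (1:ℝ)) (by norm_num)
  simp only [rpow_one] at h
  have h2 := h.const_mul ((√(2*π))⁻¹)
  refine h2.congr ?_
  · filter_upwards with x
    rw [stdGaussianPDF_eq]
    ring_nf

lemma tendsto_stdGaussianPDF_atBot : Tendsto stdGaussianPDF atBot (nhds 0) := by
  have h1 : Tendsto (fun x : ℝ => -x^2/2) atBot atBot := by
    refine tendsto_atBot_mono' atBot ?_ tendsto_id
    filter_upwards [eventually_le_atBot (-2 : ℝ)] with x hx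
    simp only [id]
    nlinarith [sq_nonneg (x+2)]
  have h2 : Tendsto (fun x : ℝ => rexp (-x^2/2)) atBot (nhds 0) :=
    Real.tendsto_exp_atBot.comp h1
  have h3 := h2.const_mul ((√(2*π))⁻¹)
  simp only [mul_zero] at h3
  refine h3.congr fun x => ?_
  rw [stdGaussianPDF_eq]

lemma hasDerivAt_neg_stdGaussianPDF (x : ℝ) :
    HasDerivAt (fun x => -stdGaussianPDF x) (x * stdGaussianPDF x) x := by
  have h1 : HasDerivAt (fun x : ℝ => -x^2/2) (-x) x := by
    have := ((hasDerivAt_pow 2 x).neg.div_const 2)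
    refine this.congr_deriv ?_
    simp; ring
  have h2 := (h1.exp.const_mul ((√(2*π))⁻¹)).neg
  have he : (fun x => -stdGaussianPDF x) = fun x => -((√(2*π))⁻¹ * rexp (-x^2/2)) := by
    funext y; rw [stdGaussianPDF_eq]
  rw [he]
  refine h2.congr_deriv ?_
  rw [stdGaussianPDF_eq]; ring

lemma integral_Iic_mul_stdGaussianPDF (z : ℝ) :
    ∫ x in Iic z, x * stdGaussianPDF x = -stdGaussianPDF z := by
  have := integral_Iic_of_hasDerivAt_of_tendsto' (a := z)
    (f := fun x => -stdGaussianPDF x) (f' := fun x => x * stdGaussianPDF x)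
    (fun x _ => hasDerivAt_neg_stdGaussianPDF x)
    integrable_mul_stdGaussianPDF.integrableOn
    (by simpa using tendsto_stdGaussianPDF_atBot.neg)
  simp only [sub_zero] at this
  linarith [this]

lemma stdGaussianCDF_eq_integral (z : ℝ) :
    stdGaussianCDF z = ∫ x in Iic z, stdGaussianPDF x := by
  rw [stdGaussianCDF, gaussianReal_apply_eq_integral 0 one_ne_zero,
    ENNReal.toReal_ofReal (setIntegral_nonneg measurableSet_Iic
      fun x _ => gaussianPDFReal_nonneg 0 1 x)]
  rfl

lemma gaussianReal_eq_withDensity :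
    gaussianReal 0 1 = (volume : Measure ℝ).withDensity
      (fun x => ((stdGaussianPDF x).toNNReal : ENNReal)) := by
  rw [gaussianReal_of_var_ne_zero 0 one_ne_zero]
  rfl

lemma integral_std_gaussian (g : ℝ → ℝ) :
    ∫ x, g x ∂(gaussianReal 0 1) = ∫ x, stdGaussianPDF x * g x := by
  rw [gaussianReal_eq_withDensity,
    integral_withDensity_eq_integral_smul measurable_stdGaussianPDF.real_toNNReal]
  congr 1
  funext x
  rw [NNReal.smul_def, smul_eq_mul, Real.coe_toNNReal _ (stdGaussianPDF_nonneg x)]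

lemma integral_max_std (z : ℝ) :
    ∫ x, max 0 (z - x) ∂(gaussianReal 0 1) = z * stdGaussianCDF z + stdGaussianPDF z := by
  rw [integral_std_gaussian]
  have h1 : (fun x => stdGaussianPDF x * max 0 (z - x)) =
      (Iic z).indicator (fun x => z * stdGaussianPDF x - x * stdGaussianPDF x) := by
    funext x
    rw [Set.indicator_apply]
    by_cases hx : x ≤ z
    · simp only [mem_Iic, hx, if_true]
      rw [max_eq_right (by linarith)]
      ring
    · simp only [mem_Iic, hx, if_false]
      rw [max_eq_left (by push_neg at hx; linarith)]
      ring
  rw [h1, integral_indicator measurableSet_Iic, integral_sub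
    ((integrable_stdGaussianPDF.const_mul z).restrict)
    (integrable_mul_stdGaussianPDF.restrict),
    MeasureTheory.integral_const_mul, integral_Iic_mul_stdGaussianPDF, ← stdGaussianCDF_eq_integral]
  ring

lemma gaussianReal_eq_map (μ σ : ℝ) (hσ : 0 < σ) :
    gaussianReal μ ⟨σ ^ 2, sq_nonneg σ⟩ =
      (gaussianReal 0 1).map (fun x => σ * x + μ) := by
  have h1 : (fun x : ℝ => σ * x + μ) = (fun x : ℝ => x + μ) ∘ (fun x : ℝ => σ * x) := rfl
  rw [h1, ← Measure.map_map (measurable_id'.add_const μ) (measurable_const_mul σ)]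
  have h2 : (gaussianReal 0 1).map (fun x => σ * x) = gaussianReal 0 ⟨σ ^ 2, sq_nonneg σ⟩ := by
    have := gaussianReal_map_const_mul (μ := 0) (v := 1) σ
    simp at this; exact this
  rw [h2]
  have := gaussianReal_map_add_const (μ := 0) (v := (⟨σ ^ 2, sq_nonneg σ⟩ : NNReal)) μ
  simpa using this.symm

lemma gaussianReal_Iic_toReal (μ σ : ℝ) (hσ : 0 < σ) (t : ℝ) :
    ((gaussianReal μ ⟨σ ^ 2, sq_nonneg σ⟩) (Iic t)).toReal = stdGaussianCDF ((t - μ) / σ) := by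
  rw [gaussianReal_eq_map μ σ hσ,
    Measure.map_apply (by fun_prop) measurableSet_Iic]
  have : (fun x : ℝ => σ * x + μ) ⁻¹' Iic t = Iic ((t - μ) / σ) := by
    ext x
    simp only [mem_preimage, mem_Iic]
    rw [le_div_iff₀ hσ]
    constructor <;> intro h <;> nlinarith
  rw [this]
  rfl

lemma integral_max_gaussian (c μ σ : ℝ) (hσ : 0 < σ) :
    ∫ x, max 0 (c - x) ∂(gaussianReal μ ⟨σ ^ 2, sq_nonneg σ⟩) =
      (c - μ) * stdGaussianCDF ((c - μ) / σ) + σ * stdGaussianPDF ((c - μ) / σ) := by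
  set z := (c - μ) / σ with hz
  have hσz : σ * z = c - μ := by
    rw [hz]; field_simp
  rw [gaussianReal_eq_map μ σ hσ,
    integral_map (by fun_prop) (f := fun x => max 0 (c - x))
      ((measurable_const.max (measurable_const.sub measurable_id')).aestronglyMeasurable)]
  have h1 : (fun x => max 0 (c - (σ * x + μ))) = fun x => σ * max 0 (z - x) := by
    funext x
    rw [mul_max_of_nonneg _ _ hσ.le, mul_zero]
    congr 1
    nlinarith [hσz]
  rw [h1, MeasureTheory.integral_const_mul, integral_max_std, mul_add, ← mul_assoc, hσz]

lemma integral_indicator_gaussian (μ σ : ℝ) (hσ : 0 < σ) :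
    ∫ x, (if x ≤ 0 then (1:ℝ) else 0) ∂(gaussianReal μ ⟨σ ^ 2, sq_nonneg σ⟩) =
      stdGaussianCDF (-μ / σ) := by
  have h1 : (fun x : ℝ => if x ≤ 0 then (1:ℝ) else 0) = (Iic (0:ℝ)).indicator 1 := by
    funext x
    rw [Set.indicator_apply]
    simp [mem_Iic]
  rw [h1, MeasureTheory.integral_indicator_one measurableSet_Iic, measureReal_def,
    gaussianReal_Iic_toReal μ σ hσ 0]
  norm_num

lemma iIndepFun_congr_ae {Ω ι : Type*} [MeasurableSpace Ω] {P : Measure Ω}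
    {f g : ι → Ω → ℝ}
    (h : iIndepFun f P) (hfg : ∀ i, f i =ᵐ[P] g i) :
    iIndepFun g P := by
  rw [iIndepFun_iff_measure_inter_preimage_eq_mul] at h ⊢
  intro S sets hmeas
  have hset : ∀ i, (f i ⁻¹' sets i : Set Ω) =ᵐ[P] (g i ⁻¹' sets i) := fun i =>
    (hfg i).mono fun ω hω => by
      show (f i ω ∈ sets i) = (g i ω ∈ sets i)
      rw [hω]
  have hInter : ((⋂ i ∈ (S : Set ι), f i ⁻¹' sets i) : Set Ω) =ᵐ[P]
      ((⋂ i ∈ (S : Set ι), g i ⁻¹' sets i) : Set Ω) := by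
    have hae : ∀ᵐ ω ∂P, ∀ i ∈ (S : Set ι), f i ω = g i ω := by
      rw [MeasureTheory.ae_ball_iff S.countable_toSet]
      exact fun i _ => hfg i
    filter_upwards [hae] with ω hω
    show (ω ∈ ⋂ i ∈ (S : Set ι), f i ⁻¹' sets i) = (ω ∈ ⋂ i ∈ (S : Set ι), g i ⁻¹' sets i)
    simp only [Set.mem_iInter, Set.mem_preimage]
    apply propext
    constructor
    · intro h' i hi
      rw [← hω i hi]; exact h' i hi
    · intro h' i hi
      rw [hω i hi]; exact h' i hi
  calc P (⋂ i ∈ S, g i ⁻¹' sets i)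
      = P (⋂ i ∈ S, f i ⁻¹' sets i) := measure_congr hInter.symm
    _ = ∏ i ∈ S, P (f i ⁻¹' sets i) := h S hmeas
    _ = ∏ i ∈ S, P (g i ⁻¹' sets i) := Finset.prod_congr rfl fun i _ => measure_congr (hset i)

lemma integral_finset_prod_of_iIndepFun {Ω : Type*} [MeasurableSpace Ω] {P : Measure Ω}
    [IsProbabilityMeasure P] {n : ℕ} {Y : Fin n → Ω → ℝ}
    (h : iIndepFun Y P) (hm : ∀ i, Measurable (Y i))
    (s : Finset (Fin n)) :
    ∫ ω, ∏ i ∈ s, Y i ω ∂P = ∏ i ∈ s, ∫ ω, Y i ω ∂P := by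
  classical
  induction s using Finset.induction_on with
  | empty => simp
  | @insert i s hi ih =>
    simp only [Finset.prod_insert hi]
    have hind : IndepFun (Y i) (∏ j ∈ s, Y j) P :=
      (h.indepFun_finsetProd_of_notMem hm hi).symm
    have hprodmeas : Measurable (∏ j ∈ s, Y j) := by
      have := Finset.measurable_prod s (fun j _ => hm j)
      convert this using 1
      funext ω
      simp [Finset.prod_apply]
    have key := hind.integral_mul_eq_mul_integral (hm i).aestronglyMeasurable hprodmeas.aestronglyMeasurable
    have h1 : ∫ ω, Y i ω * ∏ j ∈ s, Y j ω ∂P = (∫ ω, Y i ω ∂P) * ∫ ω, (∏ j ∈ s, Y j) ω ∂P := by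
      have e : (fun ω => Y i ω * ∏ j ∈ s, Y j ω) = (Y i * ∏ j ∈ s, Y j) := by
        funext ω; rw [Pi.mul_apply, Finset.prod_apply]
      calc ∫ ω, Y i ω * ∏ j ∈ s, Y j ω ∂P
          = ∫ ω, (Y i * ∏ j ∈ s, Y j) ω ∂P := by rw [e]
        _ = _ := key
    rw [h1, ← ih]
    have h2 : ∫ ω, (∏ j ∈ s, Y j) ω ∂P = ∫ ω, ∏ j ∈ s, Y j ω ∂P :=
      integral_congr_ae (Filter.Eventually.of_forall fun ω => by rw [Finset.prod_apply])
    rw [h2]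

/-- Closed form of the constraint-weighted expected improvement: if `X ~ N(μ₀, σ₀²)` and
`G_i ~ N(μ_i, σ_i²)` (`i = 1, …, m`) are jointly independent, then
`E[max(0, c − X) · ∏_i 1{G_i ≤ 0}]
  = ((c − μ₀)Φ((c − μ₀)/σ₀) + σ₀ φ((c − μ₀)/σ₀)) · ∏_i Φ(−μ_i/σ_i)`. -/
theorem constrained_expected_improvement_closed_form
    {Ω : Type*} [MeasurableSpace Ω] (P : Measure Ω) [IsProbabilityMeasure P]
    (m : ℕ) (c μ₀ σ₀ : ℝ) (hσ₀ : 0 < σ₀) (μ : Fin m → ℝ) (σ : Fin m → ℝ) (hσ : ∀ i, 0 < σ i)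
    (X : Ω → ℝ) (G : Fin m → Ω → ℝ)
    (hIndep : iIndepFun (Fin.cons X G : Fin (m + 1) → Ω → ℝ) P)
    (hX : P.map X = gaussianReal μ₀ ⟨σ₀ ^ 2, sq_nonneg σ₀⟩)
    (hG : ∀ i, P.map (G i) = gaussianReal (μ i) ⟨(σ i) ^ 2, sq_nonneg (σ i)⟩) :
    ∫ ω, max 0 (c - X ω) * ∏ i, (if G i ω ≤ 0 then (1 : ℝ) else 0) ∂P =
      ((c - μ₀) * stdGaussianCDF ((c - μ₀) / σ₀) + σ₀ * stdGaussianPDF ((c - μ₀) / σ₀)) *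
        ∏ i, stdGaussianCDF (-(μ i) / σ i) := by
  classical
  have hXae : AEMeasurable X P := aemeasurable_of_map_neZero (by rw [hX]; exact @IsProbabilityMeasure.neZero _ _ _ (instIsProbabilityMeasureGaussianReal _ _))
  have hGae : ∀ i, AEMeasurable (G i) P := fun i =>
    aemeasurable_of_map_neZero (by rw [hG i]; exact @IsProbabilityMeasure.neZero _ _ _ (instIsProbabilityMeasureGaussianReal _ _))
  set F : Fin (m+1) → Ω → ℝ := Fin.cons X G with hF
  set F' : Fin (m+1) → Ω → ℝ := Fin.cons (hXae.mk X) (fun i => (hGae i).mk (G i)) with hF'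
  have hFF' : ∀ j, F j =ᵐ[P] F' j := by
    intro j
    refine Fin.cases ?_ ?_ j
    · simpa [hF, hF'] using hXae.ae_eq_mk
    · intro i; simpa [hF, hF'] using (hGae i).ae_eq_mk
  have hF'meas : ∀ j, Measurable (F' j) := by
    intro j
    refine Fin.cases ?_ ?_ j
    · simpa [hF'] using hXae.measurable_mk
    · intro i; simpa [hF'] using (hGae i).measurable_mk
  have hIndep' : iIndepFun F' P := iIndepFun_congr_ae hIndep hFF'
  have hXmap : P.map (hXae.mk X) = gaussianReal μ₀ ⟨σ₀ ^ 2, sq_nonneg σ₀⟩ := by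
    rw [← Measure.map_congr hXae.ae_eq_mk]; exact hX
  have hGmap : ∀ i, P.map ((hGae i).mk (G i)) =
      gaussianReal (μ i) ⟨(σ i) ^ 2, sq_nonneg (σ i)⟩ := fun i => by
    rw [← Measure.map_congr (hGae i).ae_eq_mk]; exact hG i
  have hmax_meas : Measurable (fun x : ℝ => max 0 (c - x)) :=
    measurable_const.max (measurable_const.sub measurable_id')
  have hind_meas : Measurable (fun x : ℝ => if x ≤ 0 then (1:ℝ) else 0) := by
    have e : (fun x : ℝ => if x ≤ 0 then (1:ℝ) else 0) = (Set.Iic (0:ℝ)).indicator 1 := by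
      funext x; simp [Set.indicator_apply]
    rw [e]; exact measurable_one.indicator measurableSet_Iic
  set h : Fin (m+1) → ℝ → ℝ :=
    Fin.cons (fun x => max 0 (c - x)) (fun _ x => if x ≤ 0 then (1:ℝ) else 0) with hh
  have hhmeas : ∀ j, Measurable (h j) := by
    intro j
    refine Fin.cases ?_ ?_ j
    · simpa [hh] using hmax_meas
    · intro i; simpa [hh] using hind_meas
  set Y : Fin (m+1) → Ω → ℝ := fun j ω => h j (F' j ω) with hY
  have hYIndep : iIndepFun Y P := hIndep'.comp h hhmeas
  have hYmeas : ∀ j, Measurable (Y j) := fun j => (hhmeas j).comp (hF'meas j)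
  have hL1 : ∫ ω, max 0 (c - X ω) * ∏ i, (if G i ω ≤ 0 then (1:ℝ) else 0) ∂P
      = ∫ ω, ∏ j, Y j ω ∂P := by
    apply integral_congr_ae
    have hae : ∀ᵐ ω ∂P, ∀ j, F j ω = F' j ω := ae_all_iff.mpr hFF'
    filter_upwards [hae] with ω hω
    rw [Fin.prod_univ_succ]
    have e0 : F' (0 : Fin (m+1)) ω = X ω := by rw [← hω 0]; simp [hF]
    have es : ∀ i : Fin m, F' i.succ ω = G i ω := fun i => by rw [← hω i.succ]; simp [hF]
    simp only [hY, hh, Fin.cons_zero, Fin.cons_succ]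
    rw [e0]
    exact congrArg _ (Finset.prod_congr rfl fun i _ => by rw [es i])
  rw [hL1, integral_finset_prod_of_iIndepFun hYIndep hYmeas Finset.univ, Fin.prod_univ_succ]
  have hfac0 : ∫ ω, Y 0 ω ∂P =
      (c - μ₀) * stdGaussianCDF ((c - μ₀) / σ₀) + σ₀ * stdGaussianPDF ((c - μ₀) / σ₀) := by
    have hmap0 : P.map (F' 0) = gaussianReal μ₀ ⟨σ₀ ^ 2, sq_nonneg σ₀⟩ := by
      rw [show F' (0 : Fin (m+1)) = hXae.mk X from by simp [hF']]
      exact hXmap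
    have e1 : ∫ ω, Y 0 ω ∂P = ∫ x, max 0 (c - x) ∂(P.map (F' 0)) := by
      rw [integral_map (hF'meas 0).aemeasurable hmax_meas.aestronglyMeasurable]
      simp only [hY, hh, Fin.cons_zero]
    rw [e1, hmap0, integral_max_gaussian c μ₀ σ₀ hσ₀]
  have hfacs : ∀ i : Fin m, ∫ ω, Y i.succ ω ∂P = stdGaussianCDF (-(μ i) / σ i) := by
    intro i
    have hmapi : P.map (F' i.succ) = gaussianReal (μ i) ⟨(σ i) ^ 2, sq_nonneg (σ i)⟩ := by
      rw [show F' i.succ = (hGae i).mk (G i) from by simp [hF']]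
      exact hGmap i
    have e1 : ∫ ω, Y i.succ ω ∂P =
        ∫ x, (if x ≤ 0 then (1:ℝ) else 0) ∂(P.map (F' i.succ)) := by
      rw [integral_map (hF'meas i.succ).aemeasurable hind_meas.aestronglyMeasurable]
      simp only [hY, hh, Fin.cons_succ]
    rw [e1, hmapi, integral_indicator_gaussian (μ i) (σ i) (hσ i)]
  rw [hfac0]
  congr 1
  exact Finset.prod_congr rfl fun i _ => hfacs i
end
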